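/- Let k > 0, σ > 0, and let r, T be real numbers. Define w(x, t) = x·Φ(d1(x,t)) - k·exp(-r·(T - t))·Φ(d2(x,t)) for x > 0 and t < T, where d1(x,t) = (log(x/k) + (r + σ²/2)·(T - t))/(σ·√(T - t)), d2(x,t) = d1(x,t) - σ·√(T - t), and Φ is the standard normal cumulative distribution function. Then for all x > 0 and t < T, the partial derivatives of w satisfy the Black–Scholes partial differential equation ∂w/∂t = r·w - r·x·(∂w/∂x) - (1/2)·σ²·x²·(∂²w/∂x²). -/

import Mathlib

open Real MeasureTheory

/-- Standard normal cumulative distribution function. -/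
noncomputable def stdNormalCDF (y : ℝ) : ℝ :=
  ∫ u in Set.Iic y, (1 / Real.sqrt (2 * π)) * Real.exp (-u ^ 2 / 2)

/-- Standard normal density. -/
noncomputable def stdNormalPDF (y : ℝ) : ℝ :=
  (1 / Real.sqrt (2 * π)) * Real.exp (-y ^ 2 / 2)

lemma stdNormalPDF_eq : stdNormalPDF =
    fun y : ℝ => (1 / Real.sqrt (2 * π)) * Real.exp (-(1/2 : ℝ) * y ^ 2) := by
  funext y
  unfold stdNormalPDF
  rw [show -y ^ 2 / 2 = -(1/2 : ℝ) * y ^ 2 by ring]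

lemma integrable_stdNormalPDF : Integrable stdNormalPDF := by
  rw [stdNormalPDF_eq]
  exact (integrable_exp_neg_mul_sq (by norm_num : (0:ℝ) < 1/2)).const_mul _

lemma continuous_stdNormalPDF : Continuous stdNormalPDF := by
  unfold stdNormalPDF
  continuity

lemma hasDerivAt_stdNormalCDF (y : ℝ) : HasDerivAt stdNormalCDF (stdNormalPDF y) y := by
  have hint := integrable_stdNormalPDF
  have heq : ∀ z : ℝ, stdNormalCDF z = stdNormalCDF 0 + ∫ u in (0:ℝ)..z, stdNormalPDF u := by
    intro z
    have h := intervalIntegral.integral_Iic_sub_Iic (μ := volume)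
      (f := stdNormalPDF) (a := (0:ℝ)) (b := z) hint.integrableOn hint.integrableOn
    unfold stdNormalCDF stdNormalPDF at *
    linarith
  have hD : HasDerivAt (fun z : ℝ => stdNormalCDF 0 + ∫ u in (0:ℝ)..z, stdNormalPDF u)
      (stdNormalPDF y) y := by
    exact (intervalIntegral.integral_hasDerivAt_right hint.intervalIntegrable
      (continuous_stdNormalPDF.stronglyMeasurableAtFilter _ _)
      continuous_stdNormalPDF.continuousAt).const_add _
  exact hD.congr_of_eventuallyEq (Filter.Eventually.of_forall heq)

theorem stmt_9 (k σ r T : ℝ) (hk : 0 < k) (hσ : 0 < σ)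
    (d1 d2 : ℝ → ℝ → ℝ)
    (hd1 : ∀ x t, d1 x t = (Real.log (x / k) + (r + σ ^ 2 / 2) * (T - t)) / (σ * Real.sqrt (T - t)))
    (hd2 : ∀ x t, d2 x t = d1 x t - σ * Real.sqrt (T - t))
    (w : ℝ → ℝ → ℝ)
    (hw : ∀ x t, w x t =
      x * stdNormalCDF (d1 x t) - k * Real.exp (-r * (T - t)) * stdNormalCDF (d2 x t)) :
    ∀ x t : ℝ, 0 < x → t < T →
      deriv (fun s : ℝ => w x s) t =
        r * w x t - r * x * deriv (fun y : ℝ => w y t) x -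
          (1 / 2) * σ ^ 2 * x ^ 2 * deriv (fun y : ℝ => deriv (fun z : ℝ => w z t) y) x := by
  intro x t hx hT
  have hτ : 0 < T - t := sub_pos.mpr hT
  have hs : 0 < Real.sqrt (T - t) := Real.sqrt_pos.mpr hτ
  have hs2 : Real.sqrt (T - t) ^ 2 = T - t := Real.sq_sqrt hτ.le
  have hE : (0:ℝ) < Real.exp (-r * (T - t)) := Real.exp_pos _
  -- the key identity  y * φ (d1 y t) = k e^{-rτ} φ (d2 y t)
  have key_id : ∀ y : ℝ, 0 < y →
      y * stdNormalPDF (d1 y t) = k * Real.exp (-r * (T - t)) * stdNormalPDF (d2 y t) := by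
    intro y hy
    have hD : d1 y t * (σ * Real.sqrt (T - t))
        = Real.log (y / k) + (r + σ ^ 2 / 2) * (T - t) := by
      rw [hd1]
      field_simp
    have hlog : Real.log (y / k) = Real.log y - Real.log k := Real.log_div hy.ne' hk.ne'
    rw [hd2]
    set D := d1 y t with hDdef
    unfold stdNormalPDF
    have e1 : y * (1 / Real.sqrt (2 * π) * Real.exp (-D ^ 2 / 2))
        = 1 / Real.sqrt (2 * π) * Real.exp (Real.log y + -D ^ 2 / 2) := by
      rw [Real.exp_add, Real.exp_log hy]; ring
    have e2 : k * Real.exp (-r * (T - t)) *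
          (1 / Real.sqrt (2 * π) * Real.exp (-(D - σ * Real.sqrt (T - t)) ^ 2 / 2))
        = 1 / Real.sqrt (2 * π) *
          Real.exp (Real.log k + -r * (T - t) + -(D - σ * Real.sqrt (T - t)) ^ 2 / 2) := by
      rw [Real.exp_add, Real.exp_add, Real.exp_log hk]; ring
    rw [e1, e2]
    have harg : Real.log y + -D ^ 2 / 2
        = Real.log k + -r * (T - t) + -(D - σ * Real.sqrt (T - t)) ^ 2 / 2 := by
      linear_combination -hD - hlog + (σ ^ 2 / 2) * hs2
    rw [harg]
  -- derivative in x, at any y > 0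
  have hd1x : ∀ y : ℝ, 0 < y →
      HasDerivAt (fun z : ℝ => d1 z t) (1 / (y * (σ * Real.sqrt (T - t)))) y := by
    intro y hy
    have h0 : HasDerivAt (fun z : ℝ => z / k) (1 / k) y := by
      simpa using (hasDerivAt_id y).div_const k
    have h1 : HasDerivAt (fun z : ℝ => Real.log (z / k)) ((y / k)⁻¹ * (1 / k)) y :=
      (Real.hasDerivAt_log (by positivity)).comp y h0
    have h2 : HasDerivAt
        (fun z : ℝ => (Real.log (z / k) + (r + σ ^ 2 / 2) * (T - t)) / (σ * Real.sqrt (T - t)))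
        ((y / k)⁻¹ * (1 / k) / (σ * Real.sqrt (T - t))) y :=
      (h1.add_const _).div_const _
    have heq : (fun z : ℝ => d1 z t)
        = fun z : ℝ => (Real.log (z / k) + (r + σ ^ 2 / 2) * (T - t)) / (σ * Real.sqrt (T - t)) := by
      funext z; rw [hd1]
    rw [heq]
    convert h2 using 1
    field_simp
  have hd2x : ∀ y : ℝ, 0 < y →
      HasDerivAt (fun z : ℝ => d2 z t) (1 / (y * (σ * Real.sqrt (T - t)))) y := by
    intro y hy
    have heq : (fun z : ℝ => d2 z t) = fun z : ℝ => d1 z t - σ * Real.sqrt (T - t) := by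
      funext z; rw [hd2]
    rw [heq]
    exact (hd1x y hy).sub_const _
  have hwx : ∀ y : ℝ, 0 < y →
      HasDerivAt (fun z : ℝ => w z t) (stdNormalCDF (d1 y t)) y := by
    intro y hy
    have heq : (fun z : ℝ => w z t)
        = fun z : ℝ => z * stdNormalCDF (d1 z t)
            - k * Real.exp (-r * (T - t)) * stdNormalCDF (d2 z t) := by
      funext z; rw [hw]
    rw [heq]
    have hΦ1 : HasDerivAt (fun z : ℝ => stdNormalCDF (d1 z t))
        (stdNormalPDF (d1 y t) * (1 / (y * (σ * Real.sqrt (T - t))))) y :=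
      (hasDerivAt_stdNormalCDF _).comp y (hd1x y hy)
    have hΦ2 : HasDerivAt (fun z : ℝ => stdNormalCDF (d2 z t))
        (stdNormalPDF (d2 y t) * (1 / (y * (σ * Real.sqrt (T - t))))) y :=
      (hasDerivAt_stdNormalCDF _).comp y (hd2x y hy)
    have h := (hasDerivAt_id' (𝕜 := ℝ) (x := y)).mul hΦ1 |>.sub
      (hΦ2.const_mul (k * Real.exp (-r * (T - t))))
    have harr : (fun z : ℝ => z * stdNormalCDF (d1 z t)
        - k * Real.exp (-r * (T - t)) * stdNormalCDF (d2 z t))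
        = fun z : ℝ => z * stdNormalCDF (d1 z t)
            - k * Real.exp (-r * (T - t)) * stdNormalCDF (d2 z t) := rfl
    refine h.congr_deriv ?_
    have hid := key_id y hy
    linear_combination (1 / (y * (σ * Real.sqrt (T - t)))) * hid
  -- first and second derivative in x
  have hderivx : deriv (fun y : ℝ => w y t) x = stdNormalCDF (d1 x t) := (hwx x hx).deriv
  have hev : (fun y : ℝ => deriv (fun z : ℝ => w z t) y)
      =ᶠ[nhds x] fun y : ℝ => stdNormalCDF (d1 y t) := by
    filter_upwards [Ioi_mem_nhds hx] with y hy using (hwx y hy).deriv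
  have hderivxx : deriv (fun y : ℝ => deriv (fun z : ℝ => w z t) y) x
      = stdNormalPDF (d1 x t) * (1 / (x * (σ * Real.sqrt (T - t)))) := by
    rw [hev.deriv_eq]
    exact ((hasDerivAt_stdNormalCDF _).comp x (hd1x x hx)).deriv
  -- derivative in t
  have hTu : HasDerivAt (fun u : ℝ => T - u) (-1 : ℝ) t := by
    simpa using (hasDerivAt_id t).const_sub T
  have hsqrt : HasDerivAt (fun u : ℝ => Real.sqrt (T - u))
      (1 / (2 * Real.sqrt (T - t)) * (-1)) t :=
    (Real.hasDerivAt_sqrt hτ.ne').comp t hTu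
  have hN : HasDerivAt (fun u : ℝ => Real.log (x / k) + (r + σ ^ 2 / 2) * (T - u))
      (-(r + σ ^ 2 / 2)) t := by
    have := (hTu.const_mul (r + σ ^ 2 / 2)).const_add (Real.log (x / k))
    simpa using this
  have hDen : HasDerivAt (fun u : ℝ => σ * Real.sqrt (T - u))
      (σ * (1 / (2 * Real.sqrt (T - t)) * (-1))) t := hsqrt.const_mul σ
  have hden0 : σ * Real.sqrt (T - t) ≠ 0 := by positivity
  have hd1t : HasDerivAt (fun u : ℝ => d1 x u)
      ((-(r + σ ^ 2 / 2) * (σ * Real.sqrt (T - t))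
        - (Real.log (x / k) + (r + σ ^ 2 / 2) * (T - t))
            * (σ * (1 / (2 * Real.sqrt (T - t)) * (-1)))) / (σ * Real.sqrt (T - t)) ^ 2) t := by
    have heq : (fun u : ℝ => d1 x u)
        = fun u : ℝ => (Real.log (x / k) + (r + σ ^ 2 / 2) * (T - u)) / (σ * Real.sqrt (T - u)) := by
      funext u; rw [hd1]
    rw [heq]
    exact hN.div hDen hden0
  have hd2t : HasDerivAt (fun u : ℝ => d2 x u)
      ((-(r + σ ^ 2 / 2) * (σ * Real.sqrt (T - t))
        - (Real.log (x / k) + (r + σ ^ 2 / 2) * (T - t))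
            * (σ * (1 / (2 * Real.sqrt (T - t)) * (-1)))) / (σ * Real.sqrt (T - t)) ^ 2
        - σ * (1 / (2 * Real.sqrt (T - t)) * (-1))) t := by
    have heq : (fun u : ℝ => d2 x u) = fun u : ℝ => d1 x u - σ * Real.sqrt (T - u) := by
      funext u; rw [hd2]
    rw [heq]
    exact hd1t.sub hDen
  have hexp : HasDerivAt (fun u : ℝ => Real.exp (-r * (T - u)))
      (Real.exp (-r * (T - t)) * r) t := by
    have hin : HasDerivAt (fun u : ℝ => -r * (T - u)) r t := by
      have := hTu.const_mul (-r)
      simpa using this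
    have := (Real.hasDerivAt_exp (-r * (T - t))).comp t hin
    exact this
  have hΦ1t : HasDerivAt (fun u : ℝ => stdNormalCDF (d1 x u))
      (stdNormalPDF (d1 x t) *
        ((-(r + σ ^ 2 / 2) * (σ * Real.sqrt (T - t))
        - (Real.log (x / k) + (r + σ ^ 2 / 2) * (T - t))
            * (σ * (1 / (2 * Real.sqrt (T - t)) * (-1)))) / (σ * Real.sqrt (T - t)) ^ 2)) t :=
    (hasDerivAt_stdNormalCDF _).comp t hd1t
  have hΦ2t : HasDerivAt (fun u : ℝ => stdNormalCDF (d2 x u))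
      (stdNormalPDF (d2 x t) *
        ((-(r + σ ^ 2 / 2) * (σ * Real.sqrt (T - t))
        - (Real.log (x / k) + (r + σ ^ 2 / 2) * (T - t))
            * (σ * (1 / (2 * Real.sqrt (T - t)) * (-1)))) / (σ * Real.sqrt (T - t)) ^ 2
        - σ * (1 / (2 * Real.sqrt (T - t)) * (-1)))) t :=
    (hasDerivAt_stdNormalCDF _).comp t hd2t
  have hwt : HasDerivAt (fun u : ℝ => w x u)
      (x * (stdNormalPDF (d1 x t) *
        ((-(r + σ ^ 2 / 2) * (σ * Real.sqrt (T - t))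
        - (Real.log (x / k) + (r + σ ^ 2 / 2) * (T - t))
            * (σ * (1 / (2 * Real.sqrt (T - t)) * (-1)))) / (σ * Real.sqrt (T - t)) ^ 2))
      - (k * (Real.exp (-r * (T - t)) * r) * stdNormalCDF (d2 x t)
        + k * Real.exp (-r * (T - t)) *
          (stdNormalPDF (d2 x t) *
            ((-(r + σ ^ 2 / 2) * (σ * Real.sqrt (T - t))
            - (Real.log (x / k) + (r + σ ^ 2 / 2) * (T - t))
                * (σ * (1 / (2 * Real.sqrt (T - t)) * (-1)))) / (σ * Real.sqrt (T - t)) ^ 2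
            - σ * (1 / (2 * Real.sqrt (T - t)) * (-1)))))) t := by
    have heq : (fun u : ℝ => w x u)
        = fun u : ℝ => x * stdNormalCDF (d1 x u)
            - (fun u : ℝ => k * Real.exp (-r * (T - u))) u * stdNormalCDF (d2 x u) := by
      funext u; rw [hw]
    rw [heq]
    exact (hΦ1t.const_mul x).sub ((hexp.const_mul k).mul hΦ2t)
  -- put everything together
  rw [hwt.deriv, hderivx, hderivxx, hw]
  have hφ2 : stdNormalPDF (d2 x t)
      = x * stdNormalPDF (d1 x t) / (k * Real.exp (-r * (T - t))) := by
    rw [eq_div_iff (by positivity)]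
    linarith [key_id x hx]
  rw [hφ2]
  have hx0 : x ≠ 0 := hx.ne'
  have hss : Real.sqrt (T - t) ≠ 0 := hs.ne'
  field_simp
  ring
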